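/- For every positive integer k there exists a planar S_{2,4}-free graph on n = 14k vertices with exactly 31k = (31/14)·n edges. -/

import Mathlib

set_option maxHeartbeats 2000000

/-- `G` contains the double star `S_{2,4}`: an edge `x y`, two further neighbors of `x`,
four further neighbors of `y`, all eight vertices distinct. -/
def ContainsS24 {V : Type*} (G : SimpleGraph V) : Prop :=
  ∃ x y a b c d e f : V, G.Adj x y ∧ G.Adj x a ∧ G.Adj x b ∧
    G.Adj y c ∧ G.Adj y d ∧ G.Adj y e ∧ G.Adj y f ∧
    ([x, y, a, b, c, d, e, f] : List V).Nodup

/-- `G` is planar: it admits a drawing in the plane with injective vertex positions,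
each edge drawn as a continuous injective arc between the positions of its endpoints,
arc interiors avoiding all vertex positions, and interiors of distinct edges disjoint. -/
def IsPlanar {V : Type*} (G : SimpleGraph V) : Prop :=
  ∃ (pos : V → ℝ × ℝ) (arc : G.edgeSet → ℝ → ℝ × ℝ),
    Function.Injective pos ∧
    (∀ e, ContinuousOn (arc e) (Set.Icc 0 1)) ∧
    (∀ e, Set.InjOn (arc e) (Set.Icc 0 1)) ∧
    (∀ e : G.edgeSet, ∃ u v, (e : Sym2 V) = s(u, v) ∧ arc e 0 = pos u ∧ arc e 1 = pos v) ∧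
    (∀ e, ∀ t ∈ Set.Ioo (0 : ℝ) 1, arc e t ∉ Set.range pos) ∧
    (∀ e f : G.edgeSet, e ≠ f → ∀ s ∈ Set.Ioo (0 : ℝ) 1, ∀ t ∈ Set.Ioo (0 : ℝ) 1,
      arc e s ≠ arc f t)

def nbrMask : Fin 14 → ℕ :=
  ![118, 109, 91, 54, 45, 27, 8199, 15104, 13952, 11648, 6912, 5760, 3456, 960]

theorem H14symm : ∀ r s : Fin 14, (Nat.testBit (nbrMask r) s.val ∧ r ≠ s) →
    (Nat.testBit (nbrMask s) r.val ∧ s ≠ r) := by decide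

def H14 : SimpleGraph (Fin 14) where
  Adj r s := Nat.testBit (nbrMask r) s.val ∧ r ≠ s
  symm := ⟨fun r s h => H14symm r s h⟩
  loopless := ⟨fun r h => h.2 rfl⟩

instance H14.adjDec : DecidableRel H14.Adj :=
  fun r s => inferInstanceAs (Decidable (Nat.testBit (nbrMask r) s.val ∧ r ≠ s))

def PX : Fin 14 → ℤ := ![0, 0, 6, 3, 3, 2, 12, 30, 30, 24, 27, 27, 28, 18]
def PY : Fin 14 → ℤ := ![12, -12, 1, -4, 4, 1, 0, 12, -12, 1, -4, 4, 1, 0]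

def sepTable : List (Nat × (Int × Int × Int)) := [(9, (24, 0, 0)),
  (10, (24, 0, 0)),
  (11, (24, 0, 0)),
  (12, (24, 0, 0)),
  (13, (24, 0, 0)),
  (14, (24, 0, 0)),
  (15, (24, 0, 0)),
  (16, (24, 0, 0)),
  (17, (24, 0, 0)),
  (18, (24, 0, 0)),
  (19, (24, 0, 0)),
  (20, (24, 0, 0)),
  (21, (24, 0, 0)),
  (22, (24, 0, 0)),
  (23, (24, 0, 0)),
  (24, (24, 0, 0)),
  (25, (24, 0, 0)),
  (26, (24, 0, 0)),
  (27, (24, 0, 0)),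
  (28, (24, 0, 0)),
  (29, (24, 0, 0)),
  (30, (24, 0, 0)),
  (37, (6, -11, 25)),
  (38, (-11, -6, -72)),
  (39, (6, -11, 25)),
  (43, (-11, -6, -72)),
  (44, (-11, -6, -72)),
  (45, (-11, -6, -72)),
  (46, (6, -11, 25)),
  (47, (6, -11, 25)),
  (48, (6, -11, 25)),
  (49, (6, -11, 25)),
  (50, (6, -11, 25)),
  (51, (6, -11, 25)),
  (52, (6, -11, 25)),
  (53, (6, -11, 25)),
  (54, (6, -11, 25)),
  (55, (6, -11, 25)),
  (56, (6, -11, 25)),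
  (57, (6, -11, 25)),
  (58, (6, -11, 25)),
  (59, (6, -11, 25)),
  (60, (6, -11, 25)),
  (61, (6, -11, 25)),
  (67, (3, -8, -23)),
  (68, (3, -8, -23)),
  (69, (3, -8, -23)),
  (70, (3, -8, -23)),
  (71, (3, -8, -23)),
  (73, (3, -8, -23)),
  (75, (3, -8, -23)),
  (77, (3, -8, -23)),
  (78, (3, -8, -23)),
  (79, (3, -8, -23)),
  (80, (3, -8, -23)),
  (81, (3, -8, -23)),
  (82, (3, -8, -23)),
  (83, (3, -8, -23)),
  (84, (3, -8, -23)),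
  (85, (3, -8, -23)),
  (86, (3, -8, -23)),
  (87, (3, -8, -23)),
  (88, (3, -8, -23)),
  (89, (3, -8, -23)),
  (90, (3, -8, -23)),
  (91, (3, -8, -23)),
  (92, (3, -8, -23)),
  (98, (2, -11, -7)),
  (99, (2, -11, -7)),
  (101, (2, -11, -7)),
  (102, (2, -11, -7)),
  (103, (11, 2, 24)),
  (104, (2, -11, -7)),
  (105, (11, 2, 24)),
  (108, (2, -11, -7)),
  (109, (11, 2, 24)),
  (110, (11, 2, 24)),
  (111, (11, 2, 24)),
  (112, (11, 2, 24)),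
  (113, (11, 2, 24)),
  (114, (2, -11, -7)),
  (115, (2, -11, -7)),
  (116, (2, -11, -7)),
  (117, (2, -11, -7)),
  (118, (2, -11, -7)),
  (119, (2, -11, -7)),
  (120, (2, -11, -7)),
  (121, (2, -11, -7)),
  (122, (2, -11, -7)),
  (123, (2, -11, -7)),
  (129, (-12, -12, -144)),
  (130, (-12, -12, -144)),
  (131, (-12, -12, -144)),
  (133, (-12, -12, -144)),
  (134, (-12, -12, -144)),
  (136, (-12, -12, -144)),
  (137, (-12, -12, -144)),
  (138, (-12, -12, -144)),
  (140, (12, -12, 144)),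
  (141, (12, -12, 144)),
  (142, (12, -12, 144)),
  (143, (12, -12, 144)),
  (144, (12, -12, 144)),
  (145, (12, -12, 144)),
  (146, (12, -12, 144)),
  (147, (12, -12, 144)),
  (148, (12, -12, 144)),
  (149, (12, -12, 144)),
  (150, (12, -12, 144)),
  (151, (12, -12, 144)),
  (152, (12, -12, 144)),
  (153, (12, -12, 144)),
  (154, (12, -12, 144)),
  (167, (-13, 6, -72)),
  (168, (-13, 6, -72)),
  (169, (-13, 6, -72)),
  (170, (6, 13, 49)),
  (171, (13, -6, 72)),
  (172, (6, 13, 49)),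
  (173, (6, 13, 49)),
  (174, (6, 13, 49)),
  (175, (6, 13, 49)),
  (176, (13, -6, 72)),
  (177, (13, -6, 72)),
  (178, (13, -6, 72)),
  (179, (13, -6, 72)),
  (180, (6, 13, 49)),
  (181, (6, 13, 49)),
  (182, (6, 13, 49)),
  (183, (6, 13, 49)),
  (184, (6, 13, 49)),
  (185, (6, 13, 49)),
  (196, (3, 8, -23)),
  (197, (3, 8, -23)),
  (200, (3, 8, -23)),
  (201, (3, 8, -23)),
  (202, (3, 8, -23)),
  (203, (3, 8, -23)),
  (204, (3, 8, -23)),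
  (205, (3, 8, -23)),
  (206, (3, 8, -23)),
  (207, (3, 8, -23)),
  (208, (3, 8, -23)),
  (209, (3, 8, -23)),
  (210, (3, 8, -23)),
  (211, (3, 8, -23)),
  (212, (3, 8, -23)),
  (213, (3, 8, -23)),
  (214, (3, 8, -23)),
  (215, (3, 8, -23)),
  (216, (3, 8, -23)),
  (226, (13, -2, 24)),
  (227, (2, 13, 17)),
  (228, (2, 13, 17)),
  (229, (13, -2, 24)),
  (232, (2, 13, 17)),
  (233, (13, -2, 24)),
  (234, (2, 13, 17)),
  (235, (2, 13, 17)),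
  (236, (2, 13, 17)),
  (237, (2, 13, 17)),
  (238, (13, -2, 24)),
  (239, (13, -2, 24)),
  (240, (13, -2, 24)),
  (241, (13, -2, 24)),
  (242, (13, -2, 24)),
  (243, (2, 13, 17)),
  (244, (2, 13, 17)),
  (245, (13, -2, 24)),
  (246, (13, -2, 24)),
  (247, (2, 13, 17)),
  (257, (-12, 12, -144)),
  (258, (-12, 12, -144)),
  (260, (-12, 12, -144)),
  (261, (-12, 12, -144)),
  (262, (-12, 12, -144)),
  (264, (12, 12, 144)),
  (265, (12, 12, 144)),
  (266, (12, 12, 144)),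
  (267, (12, 12, 144)),
  (268, (12, 12, 144)),
  (269, (12, 12, 144)),
  (270, (12, 12, 144)),
  (271, (12, 12, 144)),
  (272, (12, 12, 144)),
  (273, (12, 12, 144)),
  (274, (12, 12, 144)),
  (275, (12, 12, 144)),
  (276, (12, 12, 144)),
  (277, (12, 12, 144)),
  (278, (12, 12, 144)),
  (293, (-5, 3, -27)),
  (294, (3, 5, 23)),
  (295, (3, 5, 23)),
  (296, (3, 5, 23)),
  (297, (3, 5, 23)),
  (298, (3, 5, 23)),
  (299, (3, 5, 23)),
  (300, (3, 5, 23)),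
  (301, (3, 5, 23)),
  (302, (3, 5, 23)),
  (303, (3, 5, 23)),
  (304, (3, 5, 23)),
  (305, (3, 5, 23)),
  (306, (3, 5, 23)),
  (307, (3, 5, 23)),
  (308, (3, 5, 23)),
  (309, (3, 5, 23)),
  (323, (-3, -3, -21)),
  (325, (3, -3, 15)),
  (326, (3, -3, 15)),
  (327, (3, -3, 15)),
  (328, (3, -3, 15)),
  (329, (3, -3, 15)),
  (330, (3, -3, 15)),
  (331, (3, -3, 15)),
  (332, (3, -3, 15)),
  (333, (3, -3, 15)),
  (334, (3, -3, 15)),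
  (335, (3, -3, 15)),
  (336, (3, -3, 15)),
  (337, (3, -3, 15)),
  (338, (3, -3, 15)),
  (339, (3, -3, 15)),
  (340, (3, -3, 15)),
  (353, (-6, 1, -35)),
  (354, (-6, 1, -35)),
  (355, (-6, 1, -35)),
  (357, (6, -1, 72)),
  (358, (6, -1, 72)),
  (359, (6, -1, 72)),
  (360, (6, -1, 72)),
  (361, (6, -1, 72)),
  (362, (6, -1, 72)),
  (363, (6, -1, 72)),
  (364, (6, -1, 72)),
  (365, (6, -1, 72)),
  (366, (6, -1, 72)),
  (367, (6, -1, 72)),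
  (368, (6, -1, 72)),
  (369, (6, -1, 72)),
  (370, (6, -1, 72)),
  (371, (6, -1, 72)),
  (387, (8, 0, 24)),
  (388, (8, 0, 24)),
  (389, (8, 0, 24)),
  (390, (8, 0, 24)),
  (391, (8, 0, 24)),
  (392, (8, 0, 24)),
  (393, (8, 0, 24)),
  (394, (8, 0, 24)),
  (395, (8, 0, 24)),
  (396, (8, 0, 24)),
  (397, (8, 0, 24)),
  (398, (8, 0, 24)),
  (399, (8, 0, 24)),
  (400, (8, 0, 24)),
  (401, (8, 0, 24)),
  (402, (8, 0, 24)),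
  (418, (5, 1, 11)),
  (419, (5, 1, 11)),
  (420, (5, 1, 11)),
  (421, (5, 1, 11)),
  (422, (5, 1, 11)),
  (423, (5, 1, 11)),
  (424, (5, 1, 11)),
  (425, (1, -5, 23)),
  (426, (5, 1, 11)),
  (427, (5, 1, 11)),
  (428, (5, 1, 11)),
  (429, (5, 1, 11)),
  (430, (5, 1, 11)),
  (431, (5, 1, 11)),
  (432, (5, 1, 11)),
  (433, (5, 1, 11)),
  (449, (3, -1, 5)),
  (450, (3, -1, 5)),
  (451, (1, 3, 15)),
  (452, (1, 3, 15)),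
  (453, (1, 3, 15)),
  (454, (1, 3, 15)),
  (455, (3, -1, 5)),
  (456, (3, -1, 5)),
  (457, (3, -1, 5)),
  (458, (3, -1, 5)),
  (459, (3, -1, 5)),
  (460, (1, 3, 15)),
  (461, (1, 3, 15)),
  (462, (3, -1, 5)),
  (463, (3, -1, 5)),
  (464, (1, 3, 15)),
  (481, (6, 0, 108)),
  (482, (6, 0, 108)),
  (483, (6, 0, 108)),
  (484, (6, 0, 108)),
  (486, (6, 0, 108)),
  (487, (6, 0, 108)),
  (488, (6, 0, 108)),
  (490, (6, 0, 108)),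
  (491, (6, 0, 108)),
  (493, (6, 0, 108)),
  (494, (6, 0, 108)),
  (495, (6, 0, 108)),
  (521, (-24, 0, -720)),
  (522, (-24, 0, -720)),
  (523, (-24, 0, -720)),
  (524, (-24, 0, -720)),
  (525, (-24, 0, -720)),
  (526, (-24, 0, -720)),
  (549, (-6, -11, -155)),
  (550, (11, -6, 258)),
  (551, (-6, -11, -155)),
  (555, (11, -6, 258)),
  (556, (11, -6, 258)),
  (557, (11, -6, 258)),
  (579, (-3, -8, -113)),
  (580, (-3, -8, -113)),
  (581, (-3, -8, -113)),
  (582, (-3, -8, -113)),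
  (583, (-3, -8, -113)),
  (585, (-3, -8, -113)),
  (587, (-3, -8, -113)),
  (610, (-2, -11, -67)),
  (611, (-2, -11, -67)),
  (613, (-2, -11, -67)),
  (614, (-2, -11, -67)),
  (615, (-11, 2, -306)),
  (616, (-2, -11, -67)),
  (617, (-11, 2, -306)),
  (641, (12, -12, 216)),
  (642, (12, -12, 216)),
  (643, (12, -12, 216)),
  (645, (12, -12, 216)),
  (646, (12, -12, 216)),
  (648, (12, -12, 216)),
  (649, (12, -12, 216)),
  (650, (12, -12, 216)),
  (679, (13, 6, 318)),
  (680, (13, 6, 318)),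
  (681, (13, 6, 318)),
  (708, (-3, 8, -113)),
  (709, (-3, 8, -113)),
  (712, (-3, 8, -113)),
  (738, (-13, -2, -366)),
  (739, (-2, 13, -43)),
  (740, (-2, 13, -43)),
  (741, (-13, -2, -366)),
  (769, (12, 12, 216)),
  (770, (12, 12, 216)),
  (772, (12, 12, 216)),
  (773, (12, 12, 216)),
  (774, (12, 12, 216)),
  (805, (5, 3, 123)),
  (835, (3, -3, 69)),
  (865, (6, 1, 145)),
  (866, (6, 1, 145)),
  (867, (6, 1, 145))]

def avTable : List (Nat × (Int × Int × Int)) := [(2, (24, 0, 0)),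
  (3, (24, 0, 0)),
  (4, (24, 0, 0)),
  (5, (24, 0, 0)),
  (6, (24, 0, 0)),
  (7, (24, 0, 0)),
  (8, (24, 0, 0)),
  (9, (24, 0, 0)),
  (10, (24, 0, 0)),
  (11, (24, 0, 0)),
  (12, (24, 0, 0)),
  (13, (24, 0, 0)),
  (15, (6, -11, 25)),
  (17, (6, -11, 25)),
  (18, (-11, -6, -72)),
  (19, (-11, -6, -72)),
  (20, (6, -11, 25)),
  (21, (6, -11, 25)),
  (22, (6, -11, 25)),
  (23, (6, -11, 25)),
  (24, (6, -11, 25)),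
  (25, (6, -11, 25)),
  (26, (6, -11, 25)),
  (27, (6, -11, 25)),
  (29, (3, -8, -23)),
  (30, (3, -8, -23)),
  (31, (3, -8, -23)),
  (33, (3, -8, -23)),
  (34, (3, -8, -23)),
  (35, (3, -8, -23)),
  (36, (3, -8, -23)),
  (37, (3, -8, -23)),
  (38, (3, -8, -23)),
  (39, (3, -8, -23)),
  (40, (3, -8, -23)),
  (41, (3, -8, -23)),
  (43, (2, -11, -7)),
  (44, (2, -11, -7)),
  (45, (2, -11, -7)),
  (46, (11, 2, 24)),
  (48, (2, -11, -7)),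
  (49, (11, 2, 24)),
  (50, (2, -11, -7)),
  (51, (2, -11, -7)),
  (52, (2, -11, -7)),
  (53, (2, -11, -7)),
  (54, (2, -11, -7)),
  (55, (2, -11, -7)),
  (57, (-12, -12, -144)),
  (58, (-12, -12, -144)),
  (59, (-12, -12, -144)),
  (60, (-12, -12, -144)),
  (61, (-12, -12, -144)),
  (63, (12, -12, 144)),
  (64, (12, -12, 144)),
  (65, (12, -12, 144)),
  (66, (12, -12, 144)),
  (67, (12, -12, 144)),
  (68, (12, -12, 144)),
  (69, (12, -12, 144)),
  (70, (6, 13, 49)),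
  (73, (-13, 6, -72)),
  (74, (6, 13, 49)),
  (75, (-13, 6, -72)),
  (76, (6, 13, 49)),
  (77, (6, 13, 49)),
  (78, (13, -6, 72)),
  (79, (6, 13, 49)),
  (80, (6, 13, 49)),
  (81, (6, 13, 49)),
  (82, (6, 13, 49)),
  (83, (6, 13, 49)),
  (84, (3, 8, -23)),
  (86, (3, 8, -23)),
  (88, (3, 8, -23)),
  (89, (3, 8, -23)),
  (90, (3, 8, -23)),
  (91, (3, 8, -23)),
  (92, (3, 8, -23)),
  (93, (3, 8, -23)),
  (94, (3, 8, -23)),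
  (95, (3, 8, -23)),
  (96, (3, 8, -23)),
  (97, (3, 8, -23)),
  (98, (2, 13, 17)),
  (100, (2, 13, 17)),
  (101, (13, -2, 24)),
  (102, (2, 13, 17)),
  (104, (2, 13, 17)),
  (105, (2, 13, 17)),
  (106, (13, -2, 24)),
  (107, (2, 13, 17)),
  (108, (13, -2, 24)),
  (109, (2, 13, 17)),
  (110, (2, 13, 17)),
  (111, (2, 13, 17)),
  (112, (-12, 12, -144)),
  (114, (-12, 12, -144)),
  (115, (-12, 12, -144)),
  (116, (-12, 12, -144)),
  (117, (-12, 12, -144)),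
  (119, (12, 12, 144)),
  (120, (12, 12, 144)),
  (121, (12, 12, 144)),
  (122, (12, 12, 144)),
  (123, (12, 12, 144)),
  (124, (12, 12, 144)),
  (125, (12, 12, 144)),
  (126, (3, 5, 23)),
  (127, (-3, -5, 11)),
  (130, (3, 5, 23)),
  (131, (-5, 3, -27)),
  (132, (3, 5, 23)),
  (133, (3, 5, 23)),
  (134, (3, 5, 23)),
  (135, (3, 5, 23)),
  (136, (3, 5, 23)),
  (137, (3, 5, 23)),
  (138, (3, 5, 23)),
  (139, (3, 5, 23)),
  (140, (-3, 3, 3)),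
  (141, (3, -3, 15)),
  (143, (3, -3, 15)),
  (145, (-3, -3, -21)),
  (146, (3, -3, 15)),
  (147, (3, -3, 15)),
  (148, (3, -3, 15)),
  (149, (3, -3, 15)),
  (150, (3, -3, 15)),
  (151, (3, -3, 15)),
  (152, (3, -3, 15)),
  (153, (3, -3, 15)),
  (154, (-6, 1, -35)),
  (155, (-6, 1, -35)),
  (157, (-6, 1, -35)),
  (158, (-6, 1, -35)),
  (159, (-6, 1, -35)),
  (161, (6, -1, 72)),
  (162, (6, -1, 72)),
  (163, (6, -1, 72)),
  (164, (6, -1, 72)),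
  (165, (6, -1, 72)),
  (166, (6, -1, 72)),
  (167, (6, -1, 72)),
  (168, (0, 8, 32)),
  (169, (0, -8, 32)),
  (170, (8, 0, 24)),
  (173, (-8, 0, -24)),
  (174, (8, 0, 24)),
  (175, (0, 8, 32)),
  (176, (0, -8, 32)),
  (177, (8, 0, 24)),
  (178, (8, 0, 24)),
  (179, (8, 0, 24)),
  (180, (8, 0, 24)),
  (181, (8, 0, 24)),
  (182, (-1, 5, 3)),
  (183, (1, -5, 23)),
  (184, (5, 1, 11)),
  (186, (-1, 5, 3)),
  (188, (5, 1, 11)),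
  (189, (-1, 5, 3)),
  (190, (1, -5, 23)),
  (191, (5, 1, 11)),
  (192, (1, -5, 23)),
  (193, (5, 1, 11)),
  (194, (5, 1, 11)),
  (195, (5, 1, 11)),
  (196, (1, 3, 15)),
  (197, (-1, -3, -5)),
  (198, (3, -1, 5)),
  (199, (-1, -3, -5)),
  (202, (3, -1, 5)),
  (203, (1, 3, 15)),
  (204, (-1, -3, -5)),
  (205, (1, 3, 15)),
  (206, (3, -1, 5)),
  (207, (1, 3, 15)),
  (208, (1, 3, 15)),
  (209, (1, 3, 15)),
  (210, (-6, 0, -72)),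
  (211, (-6, 0, -72)),
  (212, (-6, 0, -72)),
  (213, (-6, 0, -72)),
  (214, (-6, 0, -72)),
  (215, (-6, 0, -72)),
  (217, (6, 0, 108)),
  (218, (6, 0, 108)),
  (219, (6, 0, 108)),
  (220, (6, 0, 108)),
  (221, (6, 0, 108)),
  (222, (6, 0, 108)),
  (224, (-24, 0, -720)),
  (225, (-24, 0, -720)),
  (226, (-24, 0, -720)),
  (227, (-24, 0, -720)),
  (228, (-24, 0, -720)),
  (229, (-24, 0, -720)),
  (230, (-24, 0, -720)),
  (233, (-24, 0, -720)),
  (234, (-24, 0, -720)),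
  (235, (-24, 0, -720)),
  (236, (-24, 0, -720)),
  (237, (-24, 0, -720)),
  (238, (-6, -11, -155)),
  (239, (-6, -11, -155)),
  (240, (-6, -11, -155)),
  (241, (-6, -11, -155)),
  (242, (-6, -11, -155)),
  (243, (-6, -11, -155)),
  (244, (-6, -11, -155)),
  (246, (-6, -11, -155)),
  (248, (-6, -11, -155)),
  (249, (11, -6, 258)),
  (250, (11, -6, 258)),
  (251, (-6, -11, -155)),
  (252, (-3, -8, -113)),
  (253, (-3, -8, -113)),
  (254, (-3, -8, -113)),
  (255, (-3, -8, -113)),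
  (256, (-3, -8, -113)),
  (257, (-3, -8, -113)),
  (258, (-3, -8, -113)),
  (260, (-3, -8, -113)),
  (261, (-3, -8, -113)),
  (262, (-3, -8, -113)),
  (264, (-3, -8, -113)),
  (265, (-3, -8, -113)),
  (266, (-11, 2, -306)),
  (267, (-2, -11, -67)),
  (268, (-2, -11, -67)),
  (269, (-2, -11, -67)),
  (270, (-2, -11, -67)),
  (271, (-2, -11, -67)),
  (272, (-2, -11, -67)),
  (274, (-2, -11, -67)),
  (275, (-2, -11, -67)),
  (276, (-2, -11, -67)),
  (277, (-11, 2, -306)),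
  (279, (-2, -11, -67)),
  (280, (-12, -12, -216)),
  (281, (-12, -12, -216)),
  (282, (-12, -12, -216)),
  (283, (-12, -12, -216)),
  (284, (-12, -12, -216)),
  (285, (-12, -12, -216)),
  (286, (-12, -12, -216)),
  (288, (12, -12, 216)),
  (289, (12, -12, 216)),
  (290, (12, -12, 216)),
  (291, (12, -12, 216)),
  (292, (12, -12, 216)),
  (294, (-6, 13, -131)),
  (295, (-13, -6, -318)),
  (296, (-6, 13, -131)),
  (297, (-6, 13, -131)),
  (298, (-6, 13, -131)),
  (299, (-6, 13, -131)),
  (300, (-6, 13, -131)),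
  (301, (-6, 13, -131)),
  (304, (13, 6, 318)),
  (305, (-6, 13, -131)),
  (306, (13, 6, 318)),
  (307, (-6, 13, -131)),
  (308, (-3, 8, -113)),
  (309, (-3, 8, -113)),
  (310, (-3, 8, -113)),
  (311, (-3, 8, -113)),
  (312, (-3, 8, -113)),
  (313, (-3, 8, -113)),
  (314, (-3, 8, -113)),
  (315, (-3, 8, -113)),
  (317, (-3, 8, -113)),
  (319, (-3, 8, -113)),
  (320, (-3, 8, -113)),
  (321, (-3, 8, -113)),
  (322, (-2, 13, -43)),
  (323, (-13, -2, -366)),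
  (324, (-2, 13, -43)),
  (325, (-13, -2, -366)),
  (326, (-2, 13, -43)),
  (327, (-2, 13, -43)),
  (328, (-2, 13, -43)),
  (329, (-2, 13, -43)),
  (331, (-2, 13, -43)),
  (332, (-13, -2, -366)),
  (333, (-2, 13, -43)),
  (335, (-2, 13, -43)),
  (336, (-12, 12, -216)),
  (337, (-12, 12, -216)),
  (338, (-12, 12, -216)),
  (339, (-12, 12, -216)),
  (340, (-12, 12, -216)),
  (341, (-12, 12, -216)),
  (342, (-12, 12, -216)),
  (343, (12, 12, 216)),
  (345, (12, 12, 216)),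
  (346, (12, 12, 216)),
  (347, (12, 12, 216)),
  (348, (12, 12, 216)),
  (350, (-3, 5, -67)),
  (351, (-3, 5, -67)),
  (352, (-3, 5, -67)),
  (353, (-3, 5, -67)),
  (354, (-3, 5, -67)),
  (355, (-3, 5, -67)),
  (356, (-3, 5, -67)),
  (357, (-3, 5, -67)),
  (358, (3, -5, 101)),
  (361, (-3, 5, -67)),
  (362, (5, 3, 123)),
  (363, (-3, 5, -67)),
  (364, (-3, -3, -75)),
  (365, (-3, -3, -75)),
  (366, (-3, -3, -75)),
  (367, (-3, -3, -75)),
  (368, (-3, -3, -75)),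
  (369, (-3, -3, -75)),
  (370, (-3, -3, -75)),
  (371, (3, 3, 93)),
  (372, (-3, -3, -75)),
  (374, (-3, -3, -75)),
  (376, (3, -3, 69)),
  (377, (-3, -3, -75)),
  (378, (-6, -1, -108)),
  (379, (-6, -1, -108)),
  (380, (-6, -1, -108)),
  (381, (-6, -1, -108)),
  (382, (-6, -1, -108)),
  (383, (-6, -1, -108)),
  (384, (-6, -1, -108)),
  (385, (6, 1, 145)),
  (386, (6, 1, 145)),
  (388, (6, 1, 145)),
  (389, (6, 1, 145)),
  (390, (6, 1, 145)),
  (392, (0, 8, 32)),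
  (393, (0, -8, 32)),
  (394, (-8, 0, -216)),
  (395, (-8, 0, -216)),
  (396, (-8, 0, -216)),
  (397, (-8, 0, -216)),
  (398, (-8, 0, -216)),
  (399, (0, 8, 32)),
  (400, (0, -8, 32)),
  (401, (-8, 0, -216)),
  (404, (8, 0, 216)),
  (405, (-8, 0, -216)),
  (406, (1, 5, 33)),
  (407, (-1, -5, -7)),
  (408, (-5, 1, -139)),
  (409, (-1, -5, -7)),
  (410, (-5, 1, -139)),
  (411, (-5, 1, -139)),
  (412, (-5, 1, -139)),
  (413, (1, 5, 33)),
  (414, (-1, -5, -7)),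
  (415, (-5, 1, -139)),
  (417, (1, 5, 33)),
  (419, (-5, 1, -139)),
  (420, (-1, 3, -15)),
  (421, (1, -3, 25)),
  (422, (-1, 3, -15)),
  (423, (-3, -1, -85)),
  (424, (-1, 3, -15)),
  (425, (-1, 3, -15)),
  (426, (-1, 3, -15)),
  (427, (-1, 3, -15)),
  (428, (1, -3, 25)),
  (429, (-3, -1, -85)),
  (430, (1, -3, 25)),
  (433, (-3, -1, -85))]

def edgesL : Fin 31 → Fin 14 × Fin 14 := ![(0, 1), (0, 2), (0, 4), (0, 5), (0, 6), (1, 2), (1, 3), (1, 5), (1, 6), (2, 3), (2, 4), (2, 6), (3, 4), (3, 5), (4, 5), (6, 13), (7, 8), (7, 9), (7, 11), (7, 12), (7, 13), (8, 9), (8, 10), (8, 12), (8, 13), (9, 10), (9, 11), (9, 13), (10, 11), (10, 12), (11, 12)]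


def look (t : List (Nat × (Int × Int × Int))) (k : Nat) : Int × Int × Int :=
  (t.lookup k).getD (0, 0, 0)

def flipC : Int × Int × Int → Int × Int × Int
  | (a, b, d) => (-a, -b, -d-1)

def sepC (i j : Fin 31) : Int × Int × Int :=
  if i.val ≤ j.val then look sepTable (i.val * 31 + j.val)
  else flipC (look sepTable (j.val * 31 + i.val))

def avC (i : Fin 31) (w : Fin 14) : Int × Int × Int := look avTable (i.val * 14 + w.val)

theorem decide_edges : H14.edgeFinset.card = 31 := by decide
theorem decide_degsum : ∑ v, H14.degree v = 62 := by decide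
theorem decide_noS24 : ¬ ∃ x y : Fin 14, H14.Adj x y ∧ ∃ a : Fin 14, (H14.Adj x a ∧ a ≠ y) ∧
    ∃ b : Fin 14, (H14.Adj x b ∧ b ≠ y ∧ b ≠ a) ∧
    4 ≤ (Finset.univ.filter (fun z : Fin 14 => H14.Adj y z ∧ z ≠ x ∧ z ≠ a ∧ z ≠ b)).card := by
  decide
theorem decide_adj_edges : ∀ r s : Fin 14, H14.Adj r s →
    ∃ i : Fin 31, edgesL i = (r, s) ∨ edgesL i = (s, r) := by decide
theorem decide_det : ∀ a b c : Fin 14, H14.Adj a b → H14.Adj a c → b ≠ c →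
    (PX b - PX a) * (PY c - PY a) - (PY b - PY a) * (PX c - PX a) ≠ 0 := by decide
theorem decide_sep : ∀ i j : Fin 31,
    (edgesL i).1 ≠ (edgesL j).1 → (edgesL i).1 ≠ (edgesL j).2 →
    (edgesL i).2 ≠ (edgesL j).1 → (edgesL i).2 ≠ (edgesL j).2 →
    (sepC i j).1 * PX (edgesL i).1 + (sepC i j).2.1 * PY (edgesL i).1 ≤ (sepC i j).2.2 ∧
    (sepC i j).1 * PX (edgesL i).2 + (sepC i j).2.1 * PY (edgesL i).2 ≤ (sepC i j).2.2 ∧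
    (sepC i j).2.2 < (sepC i j).1 * PX (edgesL j).1 + (sepC i j).2.1 * PY (edgesL j).1 ∧
    (sepC i j).2.2 < (sepC i j).1 * PX (edgesL j).2 + (sepC i j).2.1 * PY (edgesL j).2 := by decide
theorem decide_avf : ∀ i : Fin 31, ∀ w : Fin 14, w ≠ (edgesL i).1 → w ≠ (edgesL i).2 →
    (avC i w).1 * PX (edgesL i).1 + (avC i w).2.1 * PY (edgesL i).1 ≤ (avC i w).2.2 ∧
    (avC i w).1 * PX (edgesL i).2 + (avC i w).2.1 * PY (edgesL i).2 ≤ (avC i w).2.2 ∧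
    (avC i w).2.2 < (avC i w).1 * PX w + (avC i w).2.1 * PY w := by decide
theorem decide_xrange : ∀ r : Fin 14, 0 ≤ PX r ∧ PX r ≤ 30 := by decide
theorem decide_Pinj : ∀ r s : Fin 14, PX r = PX s → PY r = PY s → r = s := by decide

/-! ## Geometry -/

noncomputable section

def pt (o : ℝ) (r : Fin 14) : ℝ × ℝ := (o + (PX r : ℝ), (PY r : ℝ))

def openSeg (p q : ℝ × ℝ) : Set (ℝ × ℝ) :=
  {z | ∃ t : ℝ, 0 < t ∧ t < 1 ∧ z = ((1 - t) * p.1 + t * q.1, (1 - t) * p.2 + t * q.2)}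

theorem openSeg_comm (p q : ℝ × ℝ) : openSeg p q = openSeg q p := by
  have key : ∀ a b : ℝ × ℝ, openSeg a b ⊆ openSeg b a := by
    rintro a b z ⟨t, h0, h1, rfl⟩
    refine ⟨1 - t, by linarith, by linarith, ?_⟩
    simp only [Prod.mk.injEq]
    constructor <;> ring
  exact le_antisymm (key p q) (key q p)

theorem convexL {al be d : ℝ} {p q : ℝ × ℝ} (hp : al * p.1 + be * p.2 ≤ d)
    (hq : al * q.1 + be * q.2 ≤ d) {z : ℝ × ℝ} (hz : z ∈ openSeg p q) :
    al * z.1 + be * z.2 ≤ d := by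
  obtain ⟨t, h0, h1, rfl⟩ := hz
  have e1 : al * ((1 - t) * p.1 + t * q.1) + be * ((1 - t) * p.2 + t * q.2)
      = (1 - t) * (al * p.1 + be * p.2) + t * (al * q.1 + be * q.2) := by ring
  rw [e1]
  nlinarith [mul_nonneg (by linarith : (0:ℝ) ≤ 1 - t) (by linarith : 0 ≤ d - (al * p.1 + be * p.2)),
    mul_nonneg (le_of_lt h0) (by linarith : 0 ≤ d - (al * q.1 + be * q.2))]

theorem convexL' {al be d : ℝ} {p q : ℝ × ℝ} (hp : d < al * p.1 + be * p.2)
    (hq : d < al * q.1 + be * q.2) {z : ℝ × ℝ} (hz : z ∈ openSeg p q) :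
    d < al * z.1 + be * z.2 := by
  obtain ⟨t, h0, h1, rfl⟩ := hz
  have e1 : al * ((1 - t) * p.1 + t * q.1) + be * ((1 - t) * p.2 + t * q.2)
      = (1 - t) * (al * p.1 + be * p.2) + t * (al * q.1 + be * q.2) := by ring
  rw [e1]
  nlinarith [mul_pos (by linarith : (0:ℝ) < 1 - t) (by linarith : 0 < (al * p.1 + be * p.2) - d),
    mul_pos h0 (by linarith : 0 < (al * q.1 + be * q.2) - d)]

theorem not_endpoint {p q z : ℝ × ℝ} (hpq : p ≠ q) (hz : z ∈ openSeg p q) :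
    z ≠ p ∧ z ≠ q := by
  obtain ⟨t, h0, h1, rfl⟩ := hz
  constructor
  · intro h
    have h1' : (1 - t) * p.1 + t * q.1 = p.1 := congrArg Prod.fst h
    have h2' : (1 - t) * p.2 + t * q.2 = p.2 := congrArg Prod.snd h
    have e1 : t * (q.1 - p.1) = 0 := by linarith [h1']
    have e2 : t * (q.2 - p.2) = 0 := by linarith [h2']
    have t0 : t ≠ 0 := ne_of_gt h0
    have q1 : q.1 = p.1 := by
      rcases mul_eq_zero.mp e1 with h' | h'
      · exact absurd h' t0
      · linarith
    have q2 : q.2 = p.2 := by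
      rcases mul_eq_zero.mp e2 with h' | h'
      · exact absurd h' t0
      · linarith
    exact hpq (Prod.ext q1.symm q2.symm)
  · intro h
    have h1' : (1 - t) * p.1 + t * q.1 = q.1 := congrArg Prod.fst h
    have h2' : (1 - t) * p.2 + t * q.2 = q.2 := congrArg Prod.snd h
    have e1 : (1 - t) * (p.1 - q.1) = 0 := by linarith [h1']
    have e2 : (1 - t) * (p.2 - q.2) = 0 := by linarith [h2']
    have t0 : (1 - t) ≠ 0 := by intro h'; linarith
    have q1 : p.1 = q.1 := by
      rcases mul_eq_zero.mp e1 with h' | h'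
      · exact absurd h' t0
      · linarith
    have q2 : p.2 = q.2 := by
      rcases mul_eq_zero.mp e2 with h' | h'
      · exact absurd h' t0
      · linarith
    exact hpq (Prod.ext q1 q2)

theorem det_core {p q r : ℝ × ℝ}
    (hd : (q.1 - p.1) * (r.2 - p.2) - (q.2 - p.2) * (r.1 - p.1) ≠ 0)
    {z : ℝ × ℝ} (h1 : z ∈ openSeg p q) (h2 : z ∈ openSeg p r) : False := by
  obtain ⟨t, ht0, ht1, hA⟩ := h1
  obtain ⟨s, hs0, hs1, hB⟩ := h2
  rw [hA] at hB
  have f1 : (1 - t) * p.1 + t * q.1 = (1 - s) * p.1 + s * r.1 := congrArg Prod.fst hB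
  have f2 : (1 - t) * p.2 + t * q.2 = (1 - s) * p.2 + s * r.2 := congrArg Prod.snd hB
  have e1 : t * (q.1 - p.1) = s * (r.1 - p.1) := by linarith
  have e2 : t * (q.2 - p.2) = s * (r.2 - p.2) := by linarith
  have key : t * ((q.1 - p.1) * (r.2 - p.2) - (q.2 - p.2) * (r.1 - p.1)) = 0 := by
    linear_combination (r.2 - p.2) * e1 - (r.1 - p.1) * e2
  rcases mul_eq_zero.mp key with h | h
  · exact absurd h (ne_of_gt ht0)
  · exact hd h

/-- Separation with an offset, from an integer certificate. -/
theorem sep_core (o : ℝ) (a b c d : Fin 14) (al be dd : ℤ)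
    (h1 : al * PX a + be * PY a ≤ dd) (h2 : al * PX b + be * PY b ≤ dd)
    (h3 : dd < al * PX c + be * PY c) (h4 : dd < al * PX d + be * PY d)
    {z : ℝ × ℝ} (m1 : z ∈ openSeg (pt o a) (pt o b)) (m2 : z ∈ openSeg (pt o c) (pt o d)) :
    False := by
  have key : ∀ r : Fin 14, (al : ℝ) * (pt o r).1 + (be : ℝ) * (pt o r).2
      = (al : ℝ) * o + ((al * PX r + be * PY r : ℤ) : ℝ) := by
    intro r; simp only [pt]; push_cast; ring
  have c1 : (al : ℝ) * z.1 + (be : ℝ) * z.2 ≤ (al : ℝ) * o + (dd : ℝ) := by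
    refine convexL ?_ ?_ m1 <;> rw [key] <;>
      [exact add_le_add_right (by exact_mod_cast h1) _; exact add_le_add_right (by exact_mod_cast h2) _]
  have c2 : (al : ℝ) * o + (dd : ℝ) < (al : ℝ) * z.1 + (be : ℝ) * z.2 := by
    refine convexL' ?_ ?_ m2 <;> rw [key] <;>
      [exact add_lt_add_right (by exact_mod_cast h3) _; exact add_lt_add_right (by exact_mod_cast h4) _]
  linarith

theorem av_core (o : ℝ) (a b w : Fin 14) (al be dd : ℤ)
    (h1 : al * PX a + be * PY a ≤ dd) (h2 : al * PX b + be * PY b ≤ dd)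
    (h3 : dd < al * PX w + be * PY w)
    {z : ℝ × ℝ} (m1 : z ∈ openSeg (pt o a) (pt o b)) (m2 : z = pt o w) : False := by
  have key : ∀ r : Fin 14, (al : ℝ) * (pt o r).1 + (be : ℝ) * (pt o r).2
      = (al : ℝ) * o + ((al * PX r + be * PY r : ℤ) : ℝ) := by
    intro r; simp only [pt]; push_cast; ring
  have c1 : (al : ℝ) * z.1 + (be : ℝ) * z.2 ≤ (al : ℝ) * o + (dd : ℝ) := by
    refine convexL ?_ ?_ m1 <;> rw [key] <;>
      [exact add_le_add_right (by exact_mod_cast h1) _; exact add_le_add_right (by exact_mod_cast h2) _]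
  rw [m2] at c1
  rw [key w] at c1
  have : ((al * PX w + be * PY w : ℤ) : ℝ) ≤ (dd : ℝ) := by linarith
  have : (al * PX w + be * PY w : ℤ) ≤ dd := by exact_mod_cast this
  omega

theorem det_apply (o : ℝ) (a b c : Fin 14) (hab : H14.Adj a b) (hac : H14.Adj a c)
    (hbc : b ≠ c) {z : ℝ × ℝ}
    (m1 : z ∈ openSeg (pt o a) (pt o b)) (m2 : z ∈ openSeg (pt o a) (pt o c)) : False := by
  have hd := decide_det a b c hab hac hbc
  refine det_core ?_ m1 m2
  have e1 : ((pt o b).1 - (pt o a).1) * ((pt o c).2 - (pt o a).2) -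
      ((pt o b).2 - (pt o a).2) * ((pt o c).1 - (pt o a).1)
      = (((PX b - PX a) * (PY c - PY a) - (PY b - PY a) * (PX c - PX a) : ℤ) : ℝ) := by
    simp only [pt]; push_cast; ring
  rw [e1]
  exact_mod_cast hd

theorem memb_canon (o : ℝ) (z : ℝ × ℝ) {r s : Fin 14}
    (h : z ∈ openSeg (pt o r) (pt o s)) (i : Fin 31)
    (hi : edgesL i = (r, s) ∨ edgesL i = (s, r)) :
    z ∈ openSeg (pt o (edgesL i).1) (pt o (edgesL i).2) := by
  rcases hi with h' | h' <;> rw [h']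
  · exact h
  · rw [openSeg_comm]; exact h

theorem sep_final (o : ℝ) {r s r' s' : Fin 14} (har : H14.Adj r s) (har' : H14.Adj r' s')
    (n1 : r ≠ r') (n2 : r ≠ s') (n3 : s ≠ r') (n4 : s ≠ s')
    {z : ℝ × ℝ} (m1 : z ∈ openSeg (pt o r) (pt o s)) (m2 : z ∈ openSeg (pt o r') (pt o s')) :
    False := by
  obtain ⟨i, hi⟩ := decide_adj_edges r s har
  obtain ⟨j, hj⟩ := decide_adj_edges r' s' har'
  have M1 := memb_canon o z m1 i hi
  have M2 := memb_canon o z m2 j hj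
  have guards : (edgesL i).1 ≠ (edgesL j).1 ∧ (edgesL i).1 ≠ (edgesL j).2 ∧
      (edgesL i).2 ≠ (edgesL j).1 ∧ (edgesL i).2 ≠ (edgesL j).2 := by
    rcases hi with h | h <;> rcases hj with h' | h' <;> rw [h, h']
    · exact ⟨n1, n2, n3, n4⟩
    · exact ⟨n2, n1, n4, n3⟩
    · exact ⟨n3, n4, n1, n2⟩
    · exact ⟨n4, n3, n2, n1⟩
  obtain ⟨g1, g2, g3, g4⟩ := guards
  obtain ⟨c1, c2, c3, c4⟩ := decide_sep i j g1 g2 g3 g4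
  exact sep_core o _ _ _ _ _ _ _ c1 c2 c3 c4 M1 M2

theorem av_final (o : ℝ) {r s w : Fin 14} (har : H14.Adj r s)
    (n1 : w ≠ r) (n2 : w ≠ s) {z : ℝ × ℝ}
    (m1 : z ∈ openSeg (pt o r) (pt o s)) (m2 : z = pt o w) : False := by
  obtain ⟨i, hi⟩ := decide_adj_edges r s har
  have M1 := memb_canon o z m1 i hi
  have guards : w ≠ (edgesL i).1 ∧ w ≠ (edgesL i).2 := by
    rcases hi with h | h <;> rw [h]
    · exact ⟨n1, n2⟩
    · exact ⟨n2, n1⟩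
  obtain ⟨c1, c2, c3⟩ := decide_avf i w guards.1 guards.2
  exact av_core o _ _ _ _ _ _ c1 c2 c3 M1 m2

theorem box_bound (o : ℝ) {r s : Fin 14} {z : ℝ × ℝ}
    (h : z ∈ openSeg (pt o r) (pt o s)) : o ≤ z.1 ∧ z.1 ≤ o + 30 := by
  have bx : ∀ q : Fin 14, o ≤ (pt o q).1 ∧ (pt o q).1 ≤ o + 30 := by
    intro q
    obtain ⟨l1, l2⟩ := decide_xrange q
    have l1' : (0 : ℝ) ≤ (PX q : ℝ) := by exact_mod_cast l1
    have l2' : (PX q : ℝ) ≤ 30 := by exact_mod_cast l2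
    constructor <;> simp only [pt] <;> linarith
  constructor
  · have := convexL (al := -1) (be := 0) (d := -o) (p := pt o r) (q := pt o s)
      (by have := (bx r).1; simp only [neg_mul, zero_mul, add_zero]; linarith)
      (by have := (bx s).1; simp only [neg_mul, zero_mul, add_zero]; linarith) h
    simp only [neg_mul, zero_mul, add_zero] at this; linarith
  · have := convexL (al := 1) (be := 0) (d := o + 30) (p := pt o r) (q := pt o s)
      (by have := (bx r).2; simp only [one_mul, zero_mul, add_zero]; linarith)
      (by have := (bx s).2; simp only [one_mul, zero_mul, add_zero]; linarith) h
    simp only [one_mul, zero_mul, add_zero] at this; linarith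

theorem copies_apart {c c' : ℕ} (h : c ≠ c') {x : ℝ}
    (h1 : 31 * (c : ℝ) ≤ x) (h2 : x ≤ 31 * (c : ℝ) + 30)
    (h3 : 31 * (c' : ℝ) ≤ x) (h4 : x ≤ 31 * (c' : ℝ) + 30) : False := by
  rcases Nat.lt_or_ge c c' with hlt | hge
  · have : (c : ℝ) + 1 ≤ (c' : ℝ) := by exact_mod_cast Nat.succ_le_of_lt hlt
    linarith
  · have hlt : c' < c := by omega
    have : (c' : ℝ) + 1 ≤ (c : ℝ) := by exact_mod_cast Nat.succ_le_of_lt hlt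
    linarith

end

/-! ## The graphs -/

def KG (k : ℕ) : SimpleGraph (Fin 14 × Fin k) where
  Adj p q := p.2 = q.2 ∧ H14.Adj p.1 q.1
  symm := ⟨fun p q h => ⟨h.1.symm, H14.symm.symm _ _ h.2⟩⟩
  loopless := ⟨fun p h => H14.loopless.irrefl p.1 h.2⟩

instance KGdec (k : ℕ) : DecidableRel (KG k).Adj :=
  fun p q => inferInstanceAs (Decidable (p.2 = q.2 ∧ H14.Adj p.1 q.1))

def GG (k : ℕ) : SimpleGraph (Fin (14 * k)) :=
  (KG k).comap finProdFinEquiv.symm.toEmbedding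

instance GGdec (k : ℕ) : DecidableRel (GG k).Adj := fun u v =>
  inferInstanceAs (Decidable ((KG k).Adj (finProdFinEquiv.symm u) (finProdFinEquiv.symm v)))

theorem GG_adj {k : ℕ} {u v : Fin (14 * k)} (h : (GG k).Adj u v) :
    (finProdFinEquiv.symm u).2 = (finProdFinEquiv.symm v).2 ∧
      H14.Adj (finProdFinEquiv.symm u).1 (finProdFinEquiv.symm v).1 := h

/-! ## Edge count -/

theorem KG_degree (k : ℕ) (p : Fin 14 × Fin k) : (KG k).degree p = H14.degree p.1 := by
  have hmap : (KG k).neighborFinset p = (H14.neighborFinset p.1).map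
      ⟨fun s => (s, p.2), fun a b h => (Prod.ext_iff.mp h).1⟩ := by
    ext q
    simp only [SimpleGraph.mem_neighborFinset, Finset.mem_map, Function.Embedding.coeFn_mk]
    constructor
    · rintro ⟨hc, ha⟩
      exact ⟨q.1, ha, by rw [hc]; rfl⟩
    · rintro ⟨s, hs, heq⟩
      have h1 : s = q.1 := (Prod.ext_iff.mp heq).1
      have h2 : p.2 = q.2 := (Prod.ext_iff.mp heq).2
      subst h1
      exact ⟨h2, hs⟩
  unfold SimpleGraph.degree
  rw [hmap, Finset.card_map]

theorem KG_card (k : ℕ) : (KG k).edgeFinset.card = 31 * k := by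
  have hs := SimpleGraph.sum_degrees_eq_twice_card_edges (KG k)
  have hsum : ∑ p : Fin 14 × Fin k, (KG k).degree p = 62 * k := by
    rw [Fintype.sum_prod_type]
    have h1 : ∀ r : Fin 14, ∑ c : Fin k, (KG k).degree (r, c) = k * H14.degree r := by
      intro r
      calc ∑ c : Fin k, (KG k).degree (r, c) = ∑ _c : Fin k, H14.degree r :=
            Finset.sum_congr rfl (fun c _ => KG_degree k (r, c))
        _ = k * H14.degree r := by
            rw [Finset.sum_const, Finset.card_univ, Fintype.card_fin, smul_eq_mul]
    rw [Finset.sum_congr rfl fun r _ => h1 r, ← Finset.mul_sum, decide_degsum]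
    ring
  rw [hsum] at hs
  omega

theorem GG_card (k : ℕ) : (GG k).edgeSet.ncard = 31 * k := by
  have iso : GG k ≃g KG k := SimpleGraph.Iso.comap finProdFinEquiv.symm (KG k)
  rw [← SimpleGraph.coe_edgeFinset, Set.ncard_coe_finset, iso.card_edgeFinset_eq, KG_card]

/-! ## No S24 -/

theorem fstne {k : ℕ} {v w : Fin (14 * k)} (h : v ≠ w)
    (hc : (finProdFinEquiv.symm v).2 = (finProdFinEquiv.symm w).2) :
    (finProdFinEquiv.symm v).1 ≠ (finProdFinEquiv.symm w).1 := by
  intro h1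
  exact h (finProdFinEquiv.symm.injective (Prod.ext h1 hc))

theorem GG_noS24 (k : ℕ) : ¬ ContainsS24 (GG k) := by
  rintro ⟨x, y, a, b, c, d, e, f, hxy, hxa, hxb, hyc, hyd, hye, hyf, hnd⟩
  simp only [List.nodup_cons, List.mem_cons, List.not_mem_nil, or_false, not_or,
    List.nodup_nil, and_true, List.mem_singleton, not_false_iff] at hnd
  obtain ⟨⟨nxy, nxa, nxb, nxc, nxd, nxe, nxf⟩, ⟨nya, nyb, nyc, nyd, nye, nyf⟩,
    ⟨nab, nac, nad, nae, naf⟩, ⟨nbc, nbd, nbe, nbf⟩, ⟨ncd, nce, ncf⟩, ⟨nde, ndf⟩, nef⟩ := hnd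
  obtain ⟨cxy, axy⟩ := GG_adj hxy
  obtain ⟨cxa, axa⟩ := GG_adj hxa
  obtain ⟨cxb, axb⟩ := GG_adj hxb
  obtain ⟨cyc, ayc⟩ := GG_adj hyc
  obtain ⟨cyd, ayd⟩ := GG_adj hyd
  obtain ⟨cye, aye⟩ := GG_adj hye
  obtain ⟨cyf, ayf⟩ := GG_adj hyf
  have cya := cxy.symm.trans cxa
  have cyb := cxy.symm.trans cxb
  have cab := cya.symm.trans cyb
  have cac := cya.symm.trans cyc
  have cad := cya.symm.trans cyd
  have cae := cya.symm.trans cye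
  have caf := cya.symm.trans cyf
  have cbc := cab.symm.trans cac
  have cbd := cab.symm.trans cad
  have cbe := cab.symm.trans cae
  have cbf := cab.symm.trans caf
  have cxc := cxy.trans cyc
  have cxd := cxy.trans cyd
  have cxe := cxy.trans cye
  have cxf := cxy.trans cyf
  have ccd := cyc.symm.trans cyd
  have cce := cyc.symm.trans cye
  have ccf := cyc.symm.trans cyf
  have cde := cyd.symm.trans cye
  have cdf := cyd.symm.trans cyf
  have cef := cye.symm.trans cyf
  apply decide_noS24
  refine ⟨(finProdFinEquiv.symm x).1, (finProdFinEquiv.symm y).1, axy,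
    (finProdFinEquiv.symm a).1, ⟨axa, (fstne nya cya).symm⟩,
    (finProdFinEquiv.symm b).1, ⟨axb, (fstne nyb cyb).symm, (fstne nab cab).symm⟩, ?_⟩
  have hsub : ({(finProdFinEquiv.symm c).1, (finProdFinEquiv.symm d).1,
      (finProdFinEquiv.symm e).1, (finProdFinEquiv.symm f).1} : Finset (Fin 14)) ⊆
      Finset.univ.filter (fun z : Fin 14 => H14.Adj (finProdFinEquiv.symm y).1 z ∧
        z ≠ (finProdFinEquiv.symm x).1 ∧ z ≠ (finProdFinEquiv.symm a).1 ∧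
        z ≠ (finProdFinEquiv.symm b).1) := by
    intro z hz
    simp only [Finset.mem_insert, Finset.mem_singleton] at hz
    rcases hz with rfl | rfl | rfl | rfl <;> refine Finset.mem_filter.mpr ⟨Finset.mem_univ _, ?_⟩
    · exact ⟨ayc, (fstne nxc cxc).symm, (fstne nac cac).symm, (fstne nbc cbc).symm⟩
    · exact ⟨ayd, (fstne nxd cxd).symm, (fstne nad cad).symm, (fstne nbd cbd).symm⟩
    · exact ⟨aye, (fstne nxe cxe).symm, (fstne nae cae).symm, (fstne nbe cbe).symm⟩
    · exact ⟨ayf, (fstne nxf cxf).symm, (fstne naf caf).symm, (fstne nbf cbf).symm⟩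
  have h1 := fstne ncd ccd
  have h2 := fstne nce cce
  have h3 := fstne ncf ccf
  have h4 := fstne nde cde
  have h5 := fstne ndf cdf
  have h6 := fstne nef cef
  have hcard : ({(finProdFinEquiv.symm c).1, (finProdFinEquiv.symm d).1,
      (finProdFinEquiv.symm e).1, (finProdFinEquiv.symm f).1} : Finset (Fin 14)).card = 4 := by
    rw [Finset.card_insert_of_notMem (by
        simp only [Finset.mem_insert, Finset.mem_singleton, not_or]
        exact ⟨h1, h2, h3⟩),
      Finset.card_insert_of_notMem (by
        simp only [Finset.mem_insert, Finset.mem_singleton, not_or]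
        exact ⟨h4, h5⟩),
      Finset.card_insert_of_notMem (by
        simp only [Finset.mem_singleton]
        exact h6), Finset.card_singleton]
  calc 4 = _ := hcard.symm
    _ ≤ _ := Finset.card_le_card hsub

/-! ## Planarity -/

noncomputable def posG (k : ℕ) (v : Fin (14 * k)) : ℝ × ℝ :=
  pt (31 * (((finProdFinEquiv.symm v).2 : Fin k).val : ℝ)) (finProdFinEquiv.symm v).1

theorem posG_eq {k : ℕ} (v : Fin (14 * k)) :
    posG k v = pt (31 * (((finProdFinEquiv.symm v).2 : Fin k).val : ℝ))
      (finProdFinEquiv.symm v).1 := rfl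

theorem posG_pt {k : ℕ} {v : Fin (14 * k)} {r : Fin 14} {c : Fin k}
    (h : finProdFinEquiv.symm v = (r, c)) : posG k v = pt (31 * (c.val : ℝ)) r := by
  rw [posG_eq, h]

theorem pt_box (o : ℝ) (r : Fin 14) : o ≤ (pt o r).1 ∧ (pt o r).1 ≤ o + 30 := by
  obtain ⟨l1, l2⟩ := decide_xrange r
  have l1' : (0 : ℝ) ≤ (PX r : ℝ) := by exact_mod_cast l1
  have l2' : (PX r : ℝ) ≤ 30 := by exact_mod_cast l2
  constructor <;> simp only [pt] <;> linarith

theorem posG_inj (k : ℕ) : Function.Injective (posG k) := by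
  intro u v h
  obtain ⟨ru, cu, hu⟩ : ∃ r c, finProdFinEquiv.symm u = (r, c) :=
    ⟨(finProdFinEquiv.symm u).1, (finProdFinEquiv.symm u).2, rfl⟩
  obtain ⟨rv, cv, hv⟩ : ∃ r c, finProdFinEquiv.symm v = (r, c) :=
    ⟨(finProdFinEquiv.symm v).1, (finProdFinEquiv.symm v).2, rfl⟩
  rw [posG_pt hu, posG_pt hv] at h
  have h1 : 31 * ((cu.val : ℕ) : ℝ) + (PX ru : ℝ) = 31 * ((cv.val : ℕ) : ℝ) + (PX rv : ℝ) :=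
    congrArg Prod.fst h
  have h2 : (PY ru : ℝ) = (PY rv : ℝ) := congrArg Prod.snd h
  have hYe : PY ru = PY rv := by exact_mod_cast h2
  have hcc : cu.val = cv.val := by
    by_contra hne
    obtain ⟨bu1, bu2⟩ := decide_xrange ru
    obtain ⟨bv1, bv2⟩ := decide_xrange rv
    have bu1' : (0:ℝ) ≤ (PX ru : ℝ) := by exact_mod_cast bu1
    have bu2' : (PX ru : ℝ) ≤ 30 := by exact_mod_cast bu2
    have bv1' : (0:ℝ) ≤ (PX rv : ℝ) := by exact_mod_cast bv1
    have bv2' : (PX rv : ℝ) ≤ 30 := by exact_mod_cast bv2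
    exact copies_apart hne (x := 31 * ((cu.val : ℕ) : ℝ) + (PX ru : ℝ))
      (by linarith) (by linarith) (by linarith) (by linarith)
  have hXe : PX ru = PX rv := by
    have hc' : ((cu.val : ℕ) : ℝ) = ((cv.val : ℕ) : ℝ) := by exact_mod_cast hcc
    rw [hc'] at h1
    have : (PX ru : ℝ) = (PX rv : ℝ) := by linarith
    exact_mod_cast this
  have hre : ru = rv := decide_Pinj ru rv hXe hYe
  apply finProdFinEquiv.symm.injective
  rw [hu, hv, hre, Fin.ext hcc]

def seg2 (p q : ℝ × ℝ) (t : ℝ) : ℝ × ℝ := ((1 - t) * p.1 + t * q.1, (1 - t) * p.2 + t * q.2)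

theorem seg2_mem {p q : ℝ × ℝ} {t : ℝ} (h0 : 0 < t) (h1 : t < 1) :
    seg2 p q t ∈ openSeg p q := ⟨t, h0, h1, rfl⟩

theorem avoid_w {k : ℕ} {u v w : Fin (14 * k)} (h : (GG k).Adj u v) {z : ℝ × ℝ}
    (m : z ∈ openSeg (posG k u) (posG k v)) (hz : z = posG k w) : False := by
  obtain ⟨ru, cu, hu⟩ : ∃ r c, finProdFinEquiv.symm u = (r, c) :=
    ⟨(finProdFinEquiv.symm u).1, (finProdFinEquiv.symm u).2, rfl⟩
  obtain ⟨rv, cv, hv⟩ : ∃ r c, finProdFinEquiv.symm v = (r, c) :=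
    ⟨(finProdFinEquiv.symm v).1, (finProdFinEquiv.symm v).2, rfl⟩
  obtain ⟨rw', cw, hw⟩ : ∃ r c, finProdFinEquiv.symm w = (r, c) :=
    ⟨(finProdFinEquiv.symm w).1, (finProdFinEquiv.symm w).2, rfl⟩
  obtain ⟨hc, ha⟩ := GG_adj h
  rw [hu, hv] at hc ha
  have hcc : cu = cv := hc
  have haa : H14.Adj ru rv := ha
  have hne : posG k u ≠ posG k v := fun hh => (GG k).ne_of_adj h (posG_inj k hh)
  have pu : posG k u = pt (31 * (cu.val : ℝ)) ru := posG_pt hu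
  have pv : posG k v = pt (31 * (cu.val : ℝ)) rv := by rw [posG_pt hv, ← hcc]
  have pw : posG k w = pt (31 * (cw.val : ℝ)) rw' := posG_pt hw
  rw [pu, pv] at m
  by_cases hcw : cw.val = cu.val
  · have pw' : posG k w = pt (31 * (cu.val : ℝ)) rw' := by rw [pw, hcw]
    by_cases h1 : rw' = ru
    · exact (not_endpoint (by rw [← pu, ← pv]; exact hne) m).1 (by rw [hz, pw', h1])
    · by_cases h2 : rw' = rv
      · exact (not_endpoint (by rw [← pu, ← pv]; exact hne) m).2 (by rw [hz, pw', h2])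
      · exact av_final _ haa h1 h2 m (by rw [hz, pw'])
  · obtain ⟨b1, b2⟩ := box_bound _ m
    obtain ⟨w1, w2⟩ := pt_box (31 * (cw.val : ℝ)) rw'
    have hzw : z.1 = (pt (31 * (cw.val : ℝ)) rw').1 := by rw [hz, pw]
    exact copies_apart (c := cu.val) (c' := cw.val) (fun hh => hcw hh.symm)
      b1 b2 (by rw [hzw] at *; exact le_of_le_of_eq w1 hzw.symm)
      (by calc z.1 = _ := hzw
            _ ≤ _ := w2)

theorem pair_disj {k : ℕ} {u v u' v' : Fin (14 * k)} (h : (GG k).Adj u v)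
    (h' : (GG k).Adj u' v') (hne : s(u, v) ≠ s(u', v')) {z : ℝ × ℝ}
    (m1 : z ∈ openSeg (posG k u) (posG k v))
    (m2 : z ∈ openSeg (posG k u') (posG k v')) : False := by
  obtain ⟨ru, cu, hu⟩ : ∃ r c, finProdFinEquiv.symm u = (r, c) :=
    ⟨(finProdFinEquiv.symm u).1, (finProdFinEquiv.symm u).2, rfl⟩
  obtain ⟨rv, cv, hv⟩ : ∃ r c, finProdFinEquiv.symm v = (r, c) :=
    ⟨(finProdFinEquiv.symm v).1, (finProdFinEquiv.symm v).2, rfl⟩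
  obtain ⟨ru', cu', hu'⟩ : ∃ r c, finProdFinEquiv.symm u' = (r, c) :=
    ⟨(finProdFinEquiv.symm u').1, (finProdFinEquiv.symm u').2, rfl⟩
  obtain ⟨rv', cv', hv'⟩ : ∃ r c, finProdFinEquiv.symm v' = (r, c) :=
    ⟨(finProdFinEquiv.symm v').1, (finProdFinEquiv.symm v').2, rfl⟩
  obtain ⟨hc, ha⟩ := GG_adj h
  obtain ⟨hc', ha'⟩ := GG_adj h'
  rw [hu, hv] at hc ha
  rw [hu', hv'] at hc' ha'
  have hcc : cu = cv := hc
  have hcc' : cu' = cv' := hc'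
  have haa : H14.Adj ru rv := ha
  have haa' : H14.Adj ru' rv' := ha'
  have pu : posG k u = pt (31 * (cu.val : ℝ)) ru := posG_pt hu
  have pv : posG k v = pt (31 * (cu.val : ℝ)) rv := by rw [posG_pt hv, ← hcc]
  have pu' : posG k u' = pt (31 * (cu'.val : ℝ)) ru' := posG_pt hu'
  have pv' : posG k v' = pt (31 * (cu'.val : ℝ)) rv' := by rw [posG_pt hv', ← hcc']
  rw [pu, pv] at m1
  rw [pu', pv'] at m2
  by_cases hcopy : cu.val = cu'.val
  · have hocc : (31 : ℝ) * (cu'.val : ℝ) = 31 * (cu.val : ℝ) := by rw [hcopy]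
    rw [hocc] at m2
    have hcueq : cu = cu' := Fin.ext hcopy
    have hsym : s(ru, rv) ≠ s(ru', rv') := by
      intro hs2
      apply hne
      rcases Sym2.eq_iff.mp hs2 with ⟨e1, e2⟩ | ⟨e1, e2⟩
      · have h1 : u = u' := finProdFinEquiv.symm.injective (by rw [hu, hu', e1, hcueq])
        have h2 : v = v' := finProdFinEquiv.symm.injective
          (by rw [hv, hv', e2, ← hcc, ← hcc', hcueq])
        rw [h1, h2]
      · have h1 : u = v' := finProdFinEquiv.symm.injective
          (by rw [hu, hv', e1, ← hcc', hcueq])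
        have h2 : v = u' := finProdFinEquiv.symm.injective (by rw [hv, hu', e2, ← hcc, hcueq])
        rw [h1, h2]
        exact Sym2.eq_swap
    by_cases h1 : ru = ru'
    · by_cases h2 : rv = rv'
      · exact hsym (by rw [h1, h2])
      · rw [← h1] at m2
        exact det_apply _ ru rv rv' haa (h1 ▸ haa') h2 m1 m2
    · by_cases h2 : ru = rv'
      · rw [← h2, openSeg_comm] at m2
        have hne2 : rv ≠ ru' := by
          intro hh
          exact hsym (by rw [h2, hh]; exact Sym2.eq_swap)
        exact det_apply _ ru rv ru' haa (H14.adj_symm (h2 ▸ haa')) hne2 m1 m2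
      · by_cases h3 : rv = ru'
        · rw [openSeg_comm] at m1
          rw [← h3] at m2
          exact det_apply _ rv ru rv' (H14.adj_symm haa) (h3 ▸ haa') h2 m1 m2
        · by_cases h4 : rv = rv'
          · rw [openSeg_comm] at m1
            rw [← h4, openSeg_comm] at m2
            exact det_apply _ rv ru ru' (H14.adj_symm haa) (H14.adj_symm (h4 ▸ haa')) h1 m1 m2
          · exact sep_final _ haa haa' h1 h2 h3 h4 m1 m2
  · obtain ⟨b1, b2⟩ := box_bound _ m1
    obtain ⟨b3, b4⟩ := box_bound _ m2
    exact copies_apart hcopy b1 b2 b3 b4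

theorem GG_planar (k : ℕ) : IsPlanar (GG k) := by
  classical
  have hep0 : ∀ e : (GG k).edgeSet, ∃ p : Fin (14 * k) × Fin (14 * k),
      (e : Sym2 (Fin (14 * k))) = s(p.1, p.2) :=
    fun e => Sym2.ind (f := fun q => ∃ p : Fin (14 * k) × Fin (14 * k), q = s(p.1, p.2))
      (fun u v => ⟨(u, v), rfl⟩) e.1
  choose ep hep using hep0
  have hAdj : ∀ e : (GG k).edgeSet, (GG k).Adj (ep e).1 (ep e).2 := by
    intro e
    have h2 := e.2
    rw [show (e.1 : Sym2 (Fin (14 * k))) = s((ep e).1, (ep e).2) from hep e] at h2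
    exact (SimpleGraph.mem_edgeSet _).mp h2
  have hepne : ∀ e : (GG k).edgeSet, posG k (ep e).1 ≠ posG k (ep e).2 :=
    fun e h => (GG k).ne_of_adj (hAdj e) (posG_inj k h)
  refine ⟨posG k, fun e t => seg2 (posG k (ep e).1) (posG k (ep e).2) t,
    posG_inj k, ?_, ?_, ?_, ?_, ?_⟩
  · intro e
    apply Continuous.continuousOn
    unfold seg2
    fun_prop
  · intro e t _ t' _ h
    by_contra htt
    have f1 : (1 - t) * (posG k (ep e).1).1 + t * (posG k (ep e).2).1
        = (1 - t') * (posG k (ep e).1).1 + t' * (posG k (ep e).2).1 := congrArg Prod.fst h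
    have f2 : (1 - t) * (posG k (ep e).1).2 + t * (posG k (ep e).2).2
        = (1 - t') * (posG k (ep e).1).2 + t' * (posG k (ep e).2).2 := congrArg Prod.snd h
    have e1 : (t - t') * ((posG k (ep e).2).1 - (posG k (ep e).1).1) = 0 := by linarith
    have e2 : (t - t') * ((posG k (ep e).2).2 - (posG k (ep e).1).2) = 0 := by linarith
    have htt' : t - t' ≠ 0 := sub_ne_zero.mpr htt
    have q1 : (posG k (ep e).1).1 = (posG k (ep e).2).1 := by
      rcases mul_eq_zero.mp e1 with h' | h'
      · exact absurd h' htt'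
      · linarith
    have q2 : (posG k (ep e).1).2 = (posG k (ep e).2).2 := by
      rcases mul_eq_zero.mp e2 with h' | h'
      · exact absurd h' htt'
      · linarith
    exact hepne e (Prod.ext q1 q2)
  · intro e
    refine ⟨(ep e).1, (ep e).2, hep e, ?_, ?_⟩ <;>
      · simp only [seg2]
        norm_num
  · rintro e t ht ⟨w, hw⟩
    exact avoid_w (hAdj e) (seg2_mem ht.1 ht.2) hw.symm
  · rintro e f hef s hs t ht h
    have hne : s((ep e).1, (ep e).2) ≠ s((ep f).1, (ep f).2) := by
      intro hh
      exact hef (Subtype.ext (by rw [hep e, hep f, hh]))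
    have m1 := seg2_mem (p := posG k (ep e).1) (q := posG k (ep e).2) hs.1 hs.2
    have m2 := seg2_mem (p := posG k (ep f).1) (q := posG k (ep f).2) ht.1 ht.2
    have h' : seg2 (posG k (ep e).1) (posG k (ep e).2) s
        = seg2 (posG k (ep f).1) (posG k (ep f).2) t := h
    rw [← h'] at m2
    exact pair_disj (hAdj e) (hAdj f) hne m1 m2

/-! ## Main theorem -/

theorem stmt_15 (k : ℕ) (hk : 0 < k) :
    ∃ G : SimpleGraph (Fin (14 * k)), IsPlanar G ∧ ¬ ContainsS24 G ∧
      G.edgeSet.ncard = 31 * k :=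
  ⟨GG k, GG_planar k, GG_noS24 k, GG_card k⟩
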